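/- Let ε > 0 and K > 0 be real numbers and let N₀ satisfy 0 < N₀ < K. If N : ℝ → ℝ is differentiable with N(0) = N₀ and satisfies the logistic equation N'(t) = ε · N(t) · (1 − N(t)/K) for all t ≥ 0, then 0 < N(t) < K for all t ≥ 0. (The logistic law imposes a limiting value K on the population.) -/

import Mathlib

open Set

/-- Reverse Gronwall: if |g'| ≤ C|g| on [0,s] and g s = 0 then g 0 = 0. -/
lemma aux_zero_of_deriv_le (s : ℝ) (hs : 0 ≤ s) (g g' : ℝ → ℝ)
    (hd : ∀ t ∈ Icc (0:ℝ) s, HasDerivAt g (g' t) t) (C : ℝ)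
    (hb : ∀ t ∈ Icc (0:ℝ) s, |g' t| ≤ C * |g t|) (hgs : g s = 0) : g 0 = 0 := by
  set h : ℝ → ℝ := fun t => g (s - t) with hh
  have hdh : ∀ t ∈ Icc (0:ℝ) s, HasDerivAt h (-(g' (s - t))) t := by
    intro t ht
    have hmem : s - t ∈ Icc (0:ℝ) s := ⟨by linarith [ht.2], by linarith [ht.1]⟩
    have := (hd (s - t) hmem).comp t ((hasDerivAt_id t).const_sub s)
    exact this.congr_deriv (by ring)
  have key : ∀ t ∈ Icc (0:ℝ) s, ‖h t‖ ≤ gronwallBound 0 C 0 (t - 0) := by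
    apply norm_le_gronwallBound_of_norm_deriv_right_le
      (f' := fun t => -(g' (s - t)))
    · exact fun t ht => ((hdh t ht).continuousAt).continuousWithinAt
    · exact fun t ht => ((hdh t (Ico_subset_Icc_self ht)).hasDerivWithinAt)
    · simp [hh, hgs]
    · intro t ht
      have := hb (s - t) ⟨by linarith [ht.2.le], by linarith [ht.1]⟩
      simpa [hh, Real.norm_eq_abs, abs_neg] using by linarith [this]
  have := key s ⟨hs, le_refl _⟩
  simp only [gronwallBound_ε0, zero_mul] at this
  have : ‖h s‖ ≤ 0 := by simpa using this
  have : h s = 0 := norm_le_zero_iff.mp this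
  simpa [hh] using this

/-- The logistic law imposes a limiting value K on the population: if
0 < N₀ < K and N is a differentiable solution of N' = ε·N·(1 − N/K) for t ≥ 0
with N(0) = N₀, then 0 < N(t) < K for all t ≥ 0. -/
theorem logistic_bounded (ε K N₀ : ℝ) (hε : 0 < ε) (hK : 0 < K)
    (hN₀ : 0 < N₀) (hN₀K : N₀ < K) (N : ℝ → ℝ) (hdiff : Differentiable ℝ N)
    (hode : ∀ t, 0 ≤ t → HasDerivAt N (ε * N t * (1 - N t / K)) t)
    (h0 : N 0 = N₀) :
    ∀ t, 0 ≤ t → 0 < N t ∧ N t < K := by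
  intro t₁ ht₁
  by_contra hcon
  push_neg at hcon
  -- either N t₁ ≤ 0 or N t₁ ≥ K
  rcases le_or_gt (N t₁) 0 with hle | hpos
  · -- N hits 0 at some s ∈ [0, t₁]
    have hIVT : (0:ℝ) ∈ N '' Icc 0 t₁ := by
      apply intermediate_value_Icc' ht₁ (hdiff.continuous.continuousOn)
      constructor
      · exact hle
      · rw [h0]; exact hN₀.le
    obtain ⟨s, hsmem, hNs⟩ := hIVT
    -- c t = ε (1 - N t / K), g = N, g' = c * g
    obtain ⟨C, hC⟩ := (isCompact_Icc (a := (0:ℝ)) (b := s)).exists_bound_of_continuousOn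
      (f := fun t => ε * (1 - N t / K))
      ((continuous_const.mul (continuous_const.sub (hdiff.continuous.div_const K))).continuousOn)
    have : N 0 = 0 := by
      apply aux_zero_of_deriv_le s hsmem.1 N (fun t => ε * N t * (1 - N t / K)) _ C _ hNs
      · intro u hu
        exact hode u hu.1
      · intro u hu
        have h1 := hC u hu
        calc |ε * N u * (1 - N u / K)| = |ε * (1 - N u / K)| * |N u| := by
              rw [← abs_mul]; ring_nf
          _ ≤ C * |N u| := mul_le_mul_of_nonneg_right h1 (abs_nonneg _)
    rw [h0] at this; linarith
  · have hge : K ≤ N t₁ := by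
      by_contra h
      exact absurd (hcon (lt_of_not_ge (by intro h'; linarith))) (not_le.mpr (lt_of_not_ge h))
    -- N hits K at some s ∈ [0, t₁]
    have hIVT : K ∈ N '' Icc 0 t₁ := by
      apply intermediate_value_Icc ht₁ (hdiff.continuous.continuousOn)
      constructor
      · rw [h0]; exact hN₀K.le
      · exact hge
    obtain ⟨s, hsmem, hNs⟩ := hIVT
    obtain ⟨C, hC⟩ := (isCompact_Icc (a := (0:ℝ)) (b := s)).exists_bound_of_continuousOn
      (f := fun t => ε * N t / K)
      (((continuous_const.mul hdiff.continuous).div_const K).continuousOn)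
    have : N 0 - K = 0 := by
      apply aux_zero_of_deriv_le s hsmem.1 (fun t => N t - K)
        (fun t => ε * N t * (1 - N t / K)) _ C _ (by simp [hNs])
      · intro u hu
        simpa using (hode u hu.1).sub_const K
      · intro u hu
        have h1 := hC u hu
        have heq : ε * N u * (1 - N u / K) = -(ε * N u / K) * (N u - K) := by
          field_simp; ring
        calc |ε * N u * (1 - N u / K)| = |ε * N u / K| * |N u - K| := by
              rw [heq, abs_mul, abs_neg]
          _ ≤ C * |N u - K| := mul_le_mul_of_nonneg_right h1 (abs_nonneg _)
    rw [h0] at this; linarith
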